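/- Given an instance (G,T,p) of Directed Multicut with two terminal pairs T={(s₁,t₁),(s₂,t₂)}, construct G' by adding two new vertices s, t and the edges s→s₁, t₁→t, t→s₂, t₂→s. Then for any vertex set S ⊆ V(G): G \ S has an sᵢ→tᵢ path for some i ∈ {1,2} if and only if G' \ S has an s→t path or a t→s path. Consequently, S is a multicut of (G,T) iff S is a multiway cut of (G',{s,t}). -/

import Mathlib

variable {V : Type*}

/-- A single edge step in `G \ S`: an edge of `E` with both endpoints outside `S`. -/
def DStep (E : V → V → Prop) (S : Set V) (a b : V) : Prop :=
  E a b ∧ a ∉ S ∧ b ∉ S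

/-- `b` is reachable from `a` by a directed path in `G \ S`. -/
def DReach (E : V → V → Prop) (S : Set V) (a b : V) : Prop :=
  Relation.ReflTransGen (DStep E S) a b

/-- The set of vertices reachable from the set `X` in `G \ S`. -/
def RSet (E : V → V → Prop) (S X : Set V) : Set V :=
  {v | ∃ x ∈ X, DReach E S x v}

/-- `S` is an `X`–`Y` separator: disjoint from `X ∪ Y` and destroying all `X → Y` paths. -/
def IsSep (E : V → V → Prop) (X Y S : Set V) : Prop :=
  S ∩ (X ∪ Y) = ∅ ∧ ∀ x ∈ X, ∀ y ∈ Y, ¬ DReach E S x y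

/-- `S` is an inclusion-wise minimal `X`–`Y` separator. -/
def IsMinSep (E : V → V → Prop) (X Y S : Set V) : Prop :=
  IsSep E X Y S ∧ ∀ S', S' ⊂ S → ¬ IsSep E X Y S'

/-- `S` is an important `X`–`Y` separator: a minimal separator such that no separator of at
most the same size has a strictly larger set of vertices reachable from `X`. -/
def IsImpSep (E : V → V → Prop) (X Y S : Set V) : Prop :=
  IsMinSep E X Y S ∧
    ¬ ∃ S', IsSep E X Y S' ∧ S'.ncard ≤ S.ncard ∧ RSet E S X ⊂ RSet E S' X

/-- `S` is a (vertex) multiway cut of `(G, T)`. -/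
def IsMWC (E : V → V → Prop) (T S : Set V) : Prop :=
  S ∩ T = ∅ ∧ ∀ t₁ ∈ T, ∀ t₂ ∈ T, t₁ ≠ t₂ → ¬ DReach E S t₁ t₂

/-- The forward shadow of `S` with respect to `T`: vertices outside `S ∪ T` not reachable
from `T` in `G \ S`. -/
def fShadow (E : V → V → Prop) (T S : Set V) : Set V :=
  {v | v ∉ S ∧ v ∉ T ∧ ∀ t ∈ T, ¬ DReach E S t v}

/-- The reverse shadow of `S` with respect to `T`: vertices outside `S ∪ T` that cannot
reach `T` in `G \ S`. -/
def rShadow (E : V → V → Prop) (T S : Set V) : Set V :=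
  {v | v ∉ S ∧ v ∉ T ∧ ∀ t ∈ T, ¬ DReach E S v t}

/-- The adjacency of `torso(G, C)`: an edge `(a, b)` whenever `a, b ∈ C` and `G` has a
directed `a → b` path whose internal vertices all lie outside `C`. -/
def TorsoAdj (E : V → V → Prop) (C : Set V) (a b : V) : Prop :=
  a ∈ C ∧ b ∈ C ∧ ∃ w, E a w ∧ Relation.ReflTransGen (fun x y => x ∉ C ∧ E x y) w b

/-- There is a directed `a → b` path in `G \ S` whose vertices (including the endpoints)
avoid `S`. -/
def PathAvoid (E : V → V → Prop) (S : Set V) (a b : V) : Prop :=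
  a ∉ S ∧ b ∉ S ∧ DReach E S a b

/-- The graph `G'` of the multicut-to-multiway-cut reduction: `G` together with two new
vertices `s = Sum.inr false` and `t = Sum.inr true` and the edges `s → s₁`, `t₁ → t`,
`t → s₂`, `t₂ → s`. -/
def GExt (E : V → V → Prop) (s₁ t₁ s₂ t₂ : V) : V ⊕ Bool → V ⊕ Bool → Prop
  | Sum.inl a, Sum.inl b => E a b
  | Sum.inr false, Sum.inl b => b = s₁
  | Sum.inl a, Sum.inr true => a = t₁
  | Sum.inr true, Sum.inl b => b = s₂
  | Sum.inl a, Sum.inr false => a = t₂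
  | Sum.inr _, Sum.inr _ => False


section Aux

variable {V : Type*}

private lemma inl_notin_image {S : Set V} {a : V} (h : a ∉ S) :
    Sum.inl a ∉ (Sum.inl '' S : Set (V ⊕ Bool)) := by
  rintro ⟨x, hx, hxa⟩
  exact h (by cases hxa; exact hx)

private lemma lift_reach (E : V → V → Prop) (s₁ t₁ s₂ t₂ : V) (S : Set V) {a b : V}
    (h : DReach E S a b) :
    DReach (GExt E s₁ t₁ s₂ t₂) (Sum.inl '' S) (Sum.inl a) (Sum.inl b) :=
  Relation.ReflTransGen.lift Sum.inl
    (fun x y ⟨he, hx, hy⟩ => ⟨he, inl_notin_image hx, inl_notin_image hy⟩) _ _ h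

private lemma reach_inv_st (E : V → V → Prop) (s₁ t₁ s₂ t₂ : V) (S : Set V)
    (hP : ¬ PathAvoid E S s₁ t₁) {v : V ⊕ Bool}
    (h : DReach (GExt E s₁ t₁ s₂ t₂) (Sum.inl '' S) (Sum.inr false) v) :
    v = Sum.inr false ∨ ∃ a, v = Sum.inl a ∧ a ∉ S ∧ s₁ ∉ S ∧ DReach E S s₁ a := by
  induction h with
  | refl => exact Or.inl rfl
  | @tail m w hm hstep ih =>
    obtain ⟨he, hu, hw⟩ := hstep
    rcases ih with rfl | ⟨a, rfl, haS, hs₁S, hreach⟩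
    · cases w with
      | inl b =>
        have hb : b = s₁ := he
        subst hb
        have hbS : b ∉ S := fun hb => hw ⟨_, hb, rfl⟩
        exact Or.inr ⟨b, rfl, hbS, hbS, Relation.ReflTransGen.refl⟩
      | inr c => exact he.elim
    · cases w with
      | inl b =>
        have hbS : b ∉ S := fun hb => hw ⟨_, hb, rfl⟩
        exact Or.inr ⟨b, rfl, hbS, hs₁S, hreach.tail ⟨he, haS, hbS⟩⟩
      | inr c =>
        cases c with
        | false => exact Or.inl rfl
        | true =>
          have ha : a = t₁ := he
          exact absurd ⟨hs₁S, ha ▸ haS, ha ▸ hreach⟩ hP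

private lemma reach_inv_ts (E : V → V → Prop) (s₁ t₁ s₂ t₂ : V) (S : Set V)
    (hP : ¬ PathAvoid E S s₂ t₂) {v : V ⊕ Bool}
    (h : DReach (GExt E s₁ t₁ s₂ t₂) (Sum.inl '' S) (Sum.inr true) v) :
    v = Sum.inr true ∨ ∃ a, v = Sum.inl a ∧ a ∉ S ∧ s₂ ∉ S ∧ DReach E S s₂ a := by
  induction h with
  | refl => exact Or.inl rfl
  | @tail m w hm hstep ih =>
    obtain ⟨he, hu, hw⟩ := hstep
    rcases ih with rfl | ⟨a, rfl, haS, hs₂S, hreach⟩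
    · cases w with
      | inl b =>
        have hb : b = s₂ := he
        subst hb
        have hbS : b ∉ S := fun hb => hw ⟨_, hb, rfl⟩
        exact Or.inr ⟨b, rfl, hbS, hbS, Relation.ReflTransGen.refl⟩
      | inr c => exact he.elim
    · cases w with
      | inl b =>
        have hbS : b ∉ S := fun hb => hw ⟨_, hb, rfl⟩
        exact Or.inr ⟨b, rfl, hbS, hs₂S, hreach.tail ⟨he, haS, hbS⟩⟩
      | inr c =>
        cases c with
        | true => exact Or.inl rfl
        | false =>
          have ha : a = t₂ := he
          exact absurd ⟨hs₂S, ha ▸ haS, ha ▸ hreach⟩ hP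

private lemma inr_notin_image (S : Set V) (b : Bool) :
    Sum.inr b ∉ (Sum.inl '' S : Set (V ⊕ Bool)) := by
  rintro ⟨x, hx, hxa⟩
  exact Sum.inl_ne_inr hxa

private lemma q_iff_p1 (E : V → V → Prop) (s₁ t₁ s₂ t₂ : V) (S : Set V) :
    PathAvoid (GExt E s₁ t₁ s₂ t₂) (Sum.inl '' S) (Sum.inr false) (Sum.inr true) ↔
      PathAvoid E S s₁ t₁ := by
  constructor
  · rintro ⟨-, -, hr⟩
    by_contra hP
    rcases reach_inv_st E s₁ t₁ s₂ t₂ S hP hr with h | ⟨a, ha, -⟩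
    · exact absurd h (by simp)
    · exact absurd ha (by simp)
  · rintro ⟨hs, ht, hr⟩
    refine ⟨inr_notin_image S false, inr_notin_image S true, ?_⟩
    have h1 : DStep (GExt E s₁ t₁ s₂ t₂) (Sum.inl '' S) (Sum.inr false) (Sum.inl s₁) :=
      ⟨rfl, inr_notin_image S false, inl_notin_image hs⟩
    have h2 : DStep (GExt E s₁ t₁ s₂ t₂) (Sum.inl '' S) (Sum.inl t₁) (Sum.inr true) :=
      ⟨rfl, inl_notin_image ht, inr_notin_image S true⟩
    exact ((Relation.ReflTransGen.single h1).trans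
      (lift_reach E s₁ t₁ s₂ t₂ S hr)).tail h2

private lemma q_iff_p2 (E : V → V → Prop) (s₁ t₁ s₂ t₂ : V) (S : Set V) :
    PathAvoid (GExt E s₁ t₁ s₂ t₂) (Sum.inl '' S) (Sum.inr true) (Sum.inr false) ↔
      PathAvoid E S s₂ t₂ := by
  constructor
  · rintro ⟨-, -, hr⟩
    by_contra hP
    rcases reach_inv_ts E s₁ t₁ s₂ t₂ S hP hr with h | ⟨a, ha, -⟩
    · exact absurd h (by simp)
    · exact absurd ha (by simp)
  · rintro ⟨hs, ht, hr⟩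
    refine ⟨inr_notin_image S true, inr_notin_image S false, ?_⟩
    have h1 : DStep (GExt E s₁ t₁ s₂ t₂) (Sum.inl '' S) (Sum.inr true) (Sum.inl s₂) :=
      ⟨rfl, inr_notin_image S true, inl_notin_image hs⟩
    have h2 : DStep (GExt E s₁ t₁ s₂ t₂) (Sum.inl '' S) (Sum.inl t₂) (Sum.inr false) :=
      ⟨rfl, inl_notin_image ht, inr_notin_image S false⟩
    exact ((Relation.ReflTransGen.single h1).trans
      (lift_reach E s₁ t₁ s₂ t₂ S hr)).tail h2

end Aux

/-- `G \ S` has an `sᵢ → tᵢ` path for some `i ∈ {1,2}` iff `G' \ S` has an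
`s → t` path or a `t → s` path; consequently `S` is a multicut of `(G, {(s₁,t₁),(s₂,t₂)})`
iff `S` is a multiway cut of `(G', {s, t})`. -/
theorem multicut_two_pairs_to_multiway_cut (E : V → V → Prop) (s₁ t₁ s₂ t₂ : V)
    (S : Set V) :
    ((PathAvoid E S s₁ t₁ ∨ PathAvoid E S s₂ t₂) ↔
      (PathAvoid (GExt E s₁ t₁ s₂ t₂) (Sum.inl '' S) (Sum.inr false) (Sum.inr true) ∨
        PathAvoid (GExt E s₁ t₁ s₂ t₂) (Sum.inl '' S) (Sum.inr true) (Sum.inr false))) ∧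
    ((¬ PathAvoid E S s₁ t₁ ∧ ¬ PathAvoid E S s₂ t₂) ↔
      IsMWC (GExt E s₁ t₁ s₂ t₂)
        {Sum.inr false, Sum.inr true} (Sum.inl '' S)) := by
  have hq1 := q_iff_p1 E s₁ t₁ s₂ t₂ S
  have hq2 := q_iff_p2 E s₁ t₁ s₂ t₂ S
  constructor
  · rw [hq1, hq2]
  · constructor
    · rintro ⟨h1, h2⟩
      refine ⟨?_, ?_⟩
      · ext v
        simp only [Set.mem_inter_iff, Set.mem_empty_iff_false, iff_false, not_and]
        rintro ⟨x, hx, rfl⟩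
        simp
      · rintro a (rfl | rfl) b (rfl | rfl) hne hr
        · exact hne rfl
        · exact (hq1.mp ⟨inr_notin_image S false, inr_notin_image S true, hr⟩) |> h1
        · exact (hq2.mp ⟨inr_notin_image S true, inr_notin_image S false, hr⟩) |> h2
        · exact hne rfl
    · rintro ⟨hdisj, hcut⟩
      constructor
      · intro h1
        exact hcut (Sum.inr false) (by simp) (Sum.inr true) (by simp) (by simp)
          (hq1.mpr h1).2.2
      · intro h2
        exact hcut (Sum.inr true) (by simp) (Sum.inr false) (by simp) (by simp)
          (hq2.mpr h2).2.2
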